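/- Let n ≥ 1, let X ⊆ {0,1}^n be a nonempty finite set, let U ⊆ ℝ^n be a finite set written as a union U = U_1 ∪ … ∪ U_K of nonempty finite sets, and for each k ∈ {1,…,K} let x^k ∈ X minimize max_{c∈U_k} c^⊤x over x ∈ X. Suppose some part U_{k*} is a singleton {c*} and attains the maximum part value, i.e. min_{x∈X} max_{c∈U_k} c^⊤x ≤ min_{x∈X} (c*)^⊤x for all k ∈ {1,…,K}. Then the tuple (x^1,…,x^K) is optimal for the min-max-min problem: max_{c∈U} min_{k∈{1,…,K}} c^⊤x^k = min_{(y^1,…,y^K)∈X^K} max_{c∈U} min_k c^⊤y^k, and moreover this common value equals the lower bound max_{c∈U} min_{x∈X} c^⊤x. -/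
import Mathlib


open Finset

/-- The dot product `c^⊤x = ∑ i, c i * x i`. -/
def dotProd {n : ℕ} (c x : Fin n → ℝ) : ℝ := ∑ i, c i * x i

/-- optimality certificate for the partition-based heuristic.  If the
part of the partition with largest min-max value is a singleton `{c*}`, then the
heuristic tuple `(x^1,…,x^K)` is optimal for the min-max-min problem, and the
optimal value equals the max-min lower bound. -/
theorem partition_heuristic_optimal (n K : ℕ) (hn : 1 ≤ n) (hK : 1 ≤ K)
    [DecidableEq (Fin n → ℝ)]
    (X : Finset (Fin n → ℝ)) (hX : X.Nonempty)
    (hXbin : ∀ x ∈ X, ∀ i, x i = 0 ∨ x i = 1)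
    (Usub : Fin K → Finset (Fin n → ℝ)) (hU : ∀ k, (Usub k).Nonempty)
    (xs : Fin K → (Fin n → ℝ)) (hxsmem : ∀ k, xs k ∈ X)
    (hxsopt : ∀ k, ∀ y ∈ X,
      (Usub k).sup' (hU k) (fun c => dotProd c (xs k)) ≤
        (Usub k).sup' (hU k) (fun c => dotProd c y))
    (kstar : Fin K) (cstar : Fin n → ℝ) (hsingle : Usub kstar = {cstar})
    (hattain : ∀ k, (X.inf' hX fun y => (Usub k).sup' (hU k) fun c => dotProd c y) ≤
      X.inf' hX fun y => dotProd cstar y) :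
    ((Finset.univ.biUnion Usub).sup'
        (Finset.biUnion_nonempty.mpr ⟨⟨0, hK⟩, Finset.mem_univ _, hU _⟩)
        fun c => Finset.univ.inf' (Finset.univ_nonempty_iff.mpr ⟨⟨0, hK⟩⟩)
          fun k => dotProd c (xs k)) =
      ((Fintype.piFinset fun _ : Fin K => X).inf'
        (Fintype.piFinset_nonempty.mpr fun _ => hX)
        (fun ys => (Finset.univ.biUnion Usub).sup'
          (Finset.biUnion_nonempty.mpr ⟨⟨0, hK⟩, Finset.mem_univ _, hU _⟩)
          fun c => Finset.univ.inf' (Finset.univ_nonempty_iff.mpr ⟨⟨0, hK⟩⟩)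
            fun k => dotProd c (ys k))) ∧
    ((Finset.univ.biUnion Usub).sup'
        (Finset.biUnion_nonempty.mpr ⟨⟨0, hK⟩, Finset.mem_univ _, hU _⟩)
        fun c => Finset.univ.inf' (Finset.univ_nonempty_iff.mpr ⟨⟨0, hK⟩⟩)
          fun k => dotProd c (xs k)) =
      ((Finset.univ.biUnion Usub).sup'
        (Finset.biUnion_nonempty.mpr ⟨⟨0, hK⟩, Finset.mem_univ _, hU _⟩)
        fun c => X.inf' hX fun y => dotProd c y) := by
  have hUne : (Finset.univ.biUnion Usub).Nonempty :=
    Finset.biUnion_nonempty.mpr ⟨⟨0, hK⟩, Finset.mem_univ _, hU _⟩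
  have hKne : (Finset.univ : Finset (Fin K)).Nonempty :=
    Finset.univ_nonempty_iff.mpr ⟨⟨0, hK⟩⟩
  have hcstar : cstar ∈ Finset.univ.biUnion Usub := by
    refine Finset.mem_biUnion.mpr ⟨kstar, Finset.mem_univ _, ?_⟩
    rw [hsingle]; exact Finset.mem_singleton_self _
  -- val(xs) ≤ LB
  have hA : ((Finset.univ.biUnion Usub).sup' hUne
      fun c => Finset.univ.inf' hKne fun k => dotProd c (xs k)) ≤
      (Finset.univ.biUnion Usub).sup' hUne fun c => X.inf' hX fun y => dotProd c y := by
    apply Finset.sup'_le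
    intro c hc
    obtain ⟨j, _, hcj⟩ := Finset.mem_biUnion.mp hc
    calc (Finset.univ.inf' hKne fun k => dotProd c (xs k)) ≤ dotProd c (xs j) :=
          Finset.inf'_le _ (Finset.mem_univ j)
      _ ≤ (Usub j).sup' (hU j) (fun c' => dotProd c' (xs j)) := Finset.le_sup' (f := fun c' => dotProd c' (xs j)) hcj
      _ ≤ X.inf' hX fun y => (Usub j).sup' (hU j) fun c' => dotProd c' y :=
          Finset.le_inf' _ _ (fun y hy => hxsopt j y hy)
      _ ≤ X.inf' hX fun y => dotProd cstar y := hattain j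
      _ ≤ (Finset.univ.biUnion Usub).sup' hUne fun c' => X.inf' hX fun y => dotProd c' y :=
          Finset.le_sup' (f := fun c' => X.inf' hX fun y => dotProd c' y) hcstar
  -- LB ≤ val(ys) for every tuple ys of elements of X
  have hB : ∀ ys : Fin K → (Fin n → ℝ), (∀ k, ys k ∈ X) →
      ((Finset.univ.biUnion Usub).sup' hUne fun c => X.inf' hX fun y => dotProd c y) ≤
      (Finset.univ.biUnion Usub).sup' hUne
        fun c => Finset.univ.inf' hKne fun k => dotProd c (ys k) := by
    intro ys hys
    apply Finset.sup'_mono_fun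
    intro c hc
    exact Finset.le_inf' _ _ (fun k _ => Finset.inf'_le _ (hys k))
  have hval : ((Finset.univ.biUnion Usub).sup' hUne
      fun c => Finset.univ.inf' hKne fun k => dotProd c (xs k)) =
      (Finset.univ.biUnion Usub).sup' hUne fun c => X.inf' hX fun y => dotProd c y :=
    le_antisymm hA (hB xs hxsmem)
  refine ⟨le_antisymm ?_ ?_, hval⟩
  · apply Finset.le_inf'
    intro ys hys
    exact hval.trans_le (hB ys fun k => (Fintype.mem_piFinset.mp hys) k)
  · exact Finset.inf'_le _ (Fintype.mem_piFinset.mpr hxsmem)
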